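/- Let q = p^e be a prime power. In Q = F_q[x_1,x_2]/(x_1^{q^3}, x_2^{q^3}), let S_0 and S_1 be the images of the Dickson invariants of degrees q^2-q and q^2-1 respectively (S_0 = ∑_{a+b=q} x_1^{a(q-1)} x_2^{b(q-1)}, S_1 = ∑_{a+b=q+1, a,b≥1} x_1^{a(q-1)} x_2^{b(q-1)}). Then S_1^q · S_0^{q-1} ≠ 0 in Q; specifically, the coefficient of x_1^{q^3-q} x_2^{q^3-2q^2+q} in S_1^q S_0^{q-1} is -1 (mod p). -/

import Mathlib

section AuxPoly
open Polynomial Finset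

section Poly
variable {F : Type} [Field F] (p n q : ℕ) [hp : Fact p.Prime] [CharP F p]
  (hq : q = p ^ n) (hn : n ≠ 0) (hq2 : 2 ≤ q)

/-- the geometric polynomial `1 + X + … + X^q`. -/
noncomputable def gpol (F : Type) [Field F] (q : ℕ) : Polynomial F :=
  ∑ i ∈ range (q + 1), X ^ i

include hq in
lemma frobsub (R : Type) [CommRing R] [CharP R p] (a b : R) : (a - b) ^ q = a ^ q - b ^ q := by
  subst hq; exact sub_pow_char_pow a b n

lemma hXsub1 : (X : F[X]) - 1 ≠ 0 := by
  have := X_pow_sub_C_ne_zero (R := F) (n := 1) one_pos 1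
  simpa using this

lemma hXq1 : (X : F[X]) ^ (q + 1) - 1 ≠ 0 := by
  have := X_pow_sub_C_ne_zero (R := F) (n := q + 1) (Nat.succ_pos q) 1
  simpa using this

include hq hq2 in
lemma Geq : ((X : F[X]) ^ (q + 1) - 1) ^ (q - 1) = ∑ j ∈ range q, ((X : F[X]) ^ (q + 1)) ^ j := by
  apply mul_right_cancel₀ (hXq1 q)
  have h1 : ((X : F[X]) ^ (q + 1) - 1) ^ (q - 1) * ((X : F[X]) ^ (q + 1) - 1)
      = ((X : F[X]) ^ (q + 1) - 1) ^ q := by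
    rw [← pow_succ]; congr 1; omega
  rw [h1, frobsub p n q hq, geom_sum_mul, one_pow]

include hq hq2 in
lemma starstar :
    (gpol F q) ^ (q - 1) * ((X : F[X]) ^ q - 1)
      = (∑ j ∈ range q, ((X : F[X]) ^ (q + 1)) ^ j) * ((X : F[X]) - 1) := by
  apply mul_right_cancel₀ (hXsub1 (F := F))
  have e1 : (gpol F q) * ((X : F[X]) - 1) = (X : F[X]) ^ (q + 1) - 1 := by
    simpa [gpol] using geom_sum_mul (X : F[X]) (q + 1)
  have e2 : ((X : F[X]) ^ q - 1) = ((X : F[X]) - 1) ^ q := by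
    rw [frobsub p n q hq, one_pow]
  have e3 : ((X : F[X]) - 1) ^ q = ((X : F[X]) - 1) ^ (q - 1) * ((X : F[X]) - 1) := by
    rw [← pow_succ]; congr 1; omega
  calc (gpol F q) ^ (q - 1) * ((X : F[X]) ^ q - 1) * ((X : F[X]) - 1)
      = ((gpol F q) * ((X : F[X]) - 1)) ^ (q - 1) * (((X : F[X]) - 1) * ((X : F[X]) - 1)) := by
        rw [e2, e3, mul_pow]; ring
    _ = ((X : F[X]) ^ (q + 1) - 1) ^ (q - 1) * (((X : F[X]) - 1) * ((X : F[X]) - 1)) := by rw [e1]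
    _ = (∑ j ∈ range q, ((X : F[X]) ^ (q + 1)) ^ j) * ((X : F[X]) - 1) * ((X : F[X]) - 1) := by
        rw [Geq p n q hq hq2]; ring

lemma Gcoeff0 (k : ℕ) (hk : ∀ j : ℕ, (q + 1) * j ≠ k) :
    (∑ j ∈ range q, ((X : F[X]) ^ (q + 1)) ^ j).coeff k = 0 := by
  rw [finset_sum_coeff]
  apply Finset.sum_eq_zero
  intro j hj
  rw [← pow_mul, coeff_X_pow, if_neg]
  intro h; exact hk j h.symm

include hq hq2 in
lemma c_eq_one : ∀ j : ℕ, j ≤ q - 2 → ((gpol F q) ^ (q - 1)).coeff (q * j) = 1 := by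
  intro j
  induction j with
  | zero =>
    intro _
    rw [mul_zero, coeff_zero_eq_eval_zero, eval_pow]
    have : (gpol F q).eval 0 = 1 := by
      rw [gpol, eval_finset_sum]
      rw [Finset.sum_eq_single 0]
      · simp
      · intro i _ hi; simp [zero_pow hi]
      · intro h; simp at h
    rw [this, one_pow]
  | succ j ih =>
    intro hj
    have hkey := congrArg (fun f : F[X] => f.coeff (q * (j + 1))) (starstar p n q hq hq2)
    simp only [mul_sub, mul_one, coeff_sub] at hkey
    rw [coeff_mul_X_pow' ((gpol F q) ^ (q - 1)) q (q * (j + 1))] at hkey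
    have hle : q ≤ q * (j + 1) := by nlinarith
    rw [if_pos hle] at hkey
    have hsub : q * (j + 1) - q = q * j := by
      have : q * (j + 1) = q * j + q := by ring
      omega
    rw [hsub] at hkey
    -- RHS coefficients vanish
    have hmul : q * (j + 1) = (q + 1) * (j + 1) - (j + 1) := by
      have : (q + 1) * (j + 1) = q * (j + 1) + (j + 1) := by ring
      omega
    have hG1 : (∑ j' ∈ range q, ((X : F[X]) ^ (q + 1)) ^ j').coeff (q * (j + 1)) = 0 := by
      apply Gcoeff0
      intro j' hj'
      -- (q+1) ∣ q*(j+1) and (q+1) ∣ (q+1)*(j+1) = q*(j+1) + (j+1), so (q+1) ∣ j+1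
      have hd : (q + 1) ∣ (j + 1) := by
        have h1 : (q + 1) ∣ q * (j + 1) := ⟨j', hj'.symm⟩
        have h2 : (q + 1) ∣ (q + 1) * (j + 1) := ⟨j + 1, rfl⟩
        have h3 : (q + 1) * (j + 1) - q * (j + 1) = j + 1 := by
          have : (q + 1) * (j + 1) = q * (j + 1) + (j + 1) := by ring
          omega
        exact h3 ▸ Nat.dvd_sub h2 h1
      have := Nat.le_of_dvd (Nat.succ_pos j) hd
      omega
    have hG2 : (∑ j' ∈ range q, ((X : F[X]) ^ (q + 1)) ^ j').coeff (q * (j + 1) - 1) = 0 := by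
      apply Gcoeff0
      intro j' hj'
      have hq1 : 1 ≤ q * (j + 1) := by nlinarith
      have hd : (q + 1) ∣ (j + 2) := by
        have h2 : (q + 1) ∣ (q + 1) * (j + 1) := ⟨j + 1, rfl⟩
        have h1 : (q + 1) ∣ (q * (j + 1) - 1) := ⟨j', hj'.symm⟩
        have h3 : (q + 1) * (j + 1) - (q * (j + 1) - 1) = j + 2 := by
          have : (q + 1) * (j + 1) = q * (j + 1) + (j + 1) := by ring
          omega
        exact h3 ▸ Nat.dvd_sub h2 h1
      have := Nat.le_of_dvd (by omega) hd
      omega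
    have hpos : 1 ≤ q * (j + 1) := by nlinarith
    have hGX : ((∑ j' ∈ range q, ((X : F[X]) ^ (q + 1)) ^ j') * X).coeff (q * (j + 1))
        = (∑ j' ∈ range q, ((X : F[X]) ^ (q + 1)) ^ j').coeff (q * (j + 1) - 1) := by
      rw [show q * (j + 1) = (q * (j + 1) - 1) + 1 from by omega, coeff_mul_X]
      congr 1 <;> omega
    rw [hGX, hG1, hG2, ih (by omega)] at hkey
    linear_combination -hkey

include hq hn hq2 in
lemma main_poly_coeff : ((gpol F q) ^ (q + (q - 1))).coeff (q * (q - 2)) = -1 := by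
  have hE : ExpChar F[X] p := by
    have : CharP F[X] p := inferInstance
    exact ExpChar.prime hp.out
  have hgq : (gpol F q) ^ q = ∑ i ∈ range (q + 1), (X : F[X]) ^ (i * q) := by
    rw [gpol, hq, sum_pow_char_pow]
    refine Finset.sum_congr rfl fun i _ => ?_
    rw [← pow_mul, ← hq, mul_comm]
  rw [pow_add, hgq, Finset.sum_mul, finset_sum_coeff]
  have hstep : ∀ i ∈ range (q + 1),
      ((X : F[X]) ^ (i * q) * (gpol F q) ^ (q - 1)).coeff (q * (q - 2))
        = if i ≤ q - 2 then (1 : F) else 0 := by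
    intro i _
    rw [mul_comm, coeff_mul_X_pow']
    by_cases hi : i ≤ q - 2
    · have hle : i * q ≤ q * (q - 2) := by
        rw [mul_comm]; exact Nat.mul_le_mul_left q hi
      rw [if_pos hle, if_pos hi]
      have : q * (q - 2) - i * q = q * (q - 2 - i) := by
        rw [mul_comm i q, ← Nat.mul_sub]
      rw [this]
      exact c_eq_one p n q hq hq2 (q - 2 - i) (by omega)
    · rw [if_neg hi, if_neg]
      intro hle
      rw [mul_comm] at hle
      have := Nat.le_of_mul_le_mul_left hle (by omega : 0 < q)
      omega
  rw [Finset.sum_congr rfl hstep, Finset.sum_boole]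
  have hfil : (range (q + 1)).filter (fun i => i ≤ q - 2) = range (q - 1) := by
    ext i; simp only [Finset.mem_filter, Finset.mem_range]; omega
  rw [hfil, Finset.card_range]
  have hq0 : (q : F) = 0 := by
    rw [hq, Nat.cast_pow, CharP.cast_eq_zero F p, zero_pow hn]
  rw [Nat.cast_sub (by omega : 1 ≤ q), hq0, Nat.cast_one, zero_sub]

end Poly


open MvPolynomial

section MvAux
variable {F : Type} [Field F]

lemma degree_fin_two (m : Fin 2 →₀ ℕ) : m.degree = m 0 + m 1 := by
  rw [Finsupp.degree, ← Fin.sum_univ_two (fun i => m i)]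
  exact Finset.sum_subset (Finset.subset_univ _)
    (fun x _ hx => Finsupp.notMem_support_iff.mp hx)

lemma coeff_homog {P : MvPolynomial (Fin 2) F} {d a b : ℕ}
    (hP : P.IsHomogeneous d) (hab : a + b = d) :
    MvPolynomial.coeff (Finsupp.single 0 a + Finsupp.single 1 b) P
      = (MvPolynomial.aeval ![(1 : Polynomial F), Polynomial.X] P).coeff b := by
  set T : Fin 2 →₀ ℕ := Finsupp.single 0 a + Finsupp.single 1 b with hT
  have hT0 : T 0 = a := by simp [hT, Finsupp.single_apply]
  have hT1 : T 1 = b := by simp [hT, Finsupp.single_apply]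
  conv_rhs => rw [MvPolynomial.as_sum P]
  rw [map_sum, Polynomial.finset_sum_coeff]
  have hterm : ∀ m ∈ P.support,
      ((MvPolynomial.aeval ![(1 : Polynomial F), Polynomial.X])
          ((MvPolynomial.monomial m) (MvPolynomial.coeff m P))).coeff b
        = if m = T then MvPolynomial.coeff m P else 0 := by
    intro m hm
    rw [MvPolynomial.aeval_monomial, Finsupp.prod_fintype _ _ (fun i => pow_zero _),
      Fin.prod_univ_two]
    simp only [Matrix.cons_val_zero, Matrix.cons_val_one, Matrix.head_cons, one_pow, one_mul]
    rw [Polynomial.algebraMap_eq, Polynomial.coeff_C_mul, Polynomial.coeff_X_pow]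
    by_cases hmT : m = T
    · subst hmT; rw [if_pos rfl, hT1, if_pos rfl, mul_one]
    · rw [if_neg hmT]
      by_cases hb : b = m 1
      · exfalso; apply hmT
        have hdeg : m.degree = d := by
          by_contra h
          exact (MvPolynomial.mem_support_iff.mp hm) (hP.coeff_eq_zero h)
        rw [degree_fin_two] at hdeg
        ext j
        fin_cases j
        · show m 0 = T 0
          rw [hT0]; omega
        · show m 1 = T 1
          rw [hT1]; omega
      · rw [if_neg hb, mul_zero]
  rw [Finset.sum_congr rfl hterm, Finset.sum_ite_eq' P.support T
    (fun m => MvPolynomial.coeff m P)]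
  split_ifs with h
  · rfl
  · exact MvPolynomial.notMem_support_iff.mp h

lemma mv_coeff_mul_X_pow_zero (A : MvPolynomial (Fin 2) F) (i : Fin 2) (N : ℕ)
    (m : Fin 2 →₀ ℕ) (h : m i < N) :
    MvPolynomial.coeff m (A * MvPolynomial.X i ^ N) = 0 := by
  rw [MvPolynomial.X_pow_eq_monomial, MvPolynomial.coeff_mul_monomial', if_neg]
  intro hle
  have h2 := hle i
  rw [Finsupp.single_eq_same] at h2
  omega

lemma mv_coeff_mul_X_pow (A : MvPolynomial (Fin 2) F) (i : Fin 2) (N : ℕ)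
    (m : Fin 2 →₀ ℕ) (h : N ≤ m i) :
    MvPolynomial.coeff m (A * MvPolynomial.X i ^ N)
      = MvPolynomial.coeff (m - Finsupp.single i N) A := by
  rw [MvPolynomial.X_pow_eq_monomial, MvPolynomial.coeff_mul_monomial', if_pos, mul_one]
  intro j
  rcases eq_or_ne j i with rfl | hj
  · rwa [Finsupp.single_eq_same]
  · rw [Finsupp.single_eq_of_ne hj]
    exact Nat.zero_le _

end MvAux


end AuxPoly

open MvPolynomial Finset

/-- The ideal `(x_1^N, …, x_n^N)`. -/
noncomputable def frobIdeal (F : Type) [Field F] (n N : ℕ) :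
    Ideal (MvPolynomial (Fin n) F) :=
  Ideal.span (Set.range fun i : Fin n => (MvPolynomial.X i : MvPolynomial (Fin n) F) ^ N)

/-- `S_0 = ∑_{a+b=q} x_1^{a(q-1)} x_2^{b(q-1)}`, the image of the degree-`q²-q` Dickson
invariant. -/
noncomputable def S0 (F : Type) [Field F] (q : ℕ) : MvPolynomial (Fin 2) F :=
  ∑ i ∈ Finset.range (q + 1),
    MvPolynomial.X 0 ^ ((q - i) * (q - 1)) * MvPolynomial.X 1 ^ (i * (q - 1))

/-- `S_1 = ∑_{a+b=q+1, a,b ≥ 1} x_1^{a(q-1)} x_2^{b(q-1)}`, the image of the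
degree-`q²-1` Dickson invariant. -/
noncomputable def S1 (F : Type) [Field F] (q : ℕ) : MvPolynomial (Fin 2) F :=
  ∑ i ∈ Finset.Icc 1 q,
    MvPolynomial.X 0 ^ ((q + 1 - i) * (q - 1)) * MvPolynomial.X 1 ^ (i * (q - 1))

section AuxMv

section MvMain
variable {F : Type} [Field F]

lemma S0_homog (q : ℕ) : (S0 F q).IsHomogeneous (q * (q - 1)) := by
  apply MvPolynomial.IsHomogeneous.sum
  intro i hi
  rw [Finset.mem_range] at hi
  have h1 : (MvPolynomial.X (0 : Fin 2) ^ ((q - i) * (q - 1)) :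
      MvPolynomial (Fin 2) F).IsHomogeneous ((q - i) * (q - 1)) := by
    simpa using (MvPolynomial.isHomogeneous_X F (0 : Fin 2)).pow ((q - i) * (q - 1))
  have h2 : (MvPolynomial.X (1 : Fin 2) ^ (i * (q - 1)) :
      MvPolynomial (Fin 2) F).IsHomogeneous (i * (q - 1)) := by
    simpa using (MvPolynomial.isHomogeneous_X F (1 : Fin 2)).pow (i * (q - 1))
  have harith : (q - i) * (q - 1) + i * (q - 1) = q * (q - 1) := by
    rw [Nat.sub_mul]
    have : i * (q - 1) ≤ q * (q - 1) := Nat.mul_le_mul_right _ (by omega)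
    omega
  exact harith ▸ (h1.mul h2)

lemma S1_eq (q : ℕ) (hq2 : 2 ≤ q) :
    S1 F q = S0 F q * MvPolynomial.X 1 ^ (q - 1)
      - MvPolynomial.X 1 ^ ((q + 1) * (q - 1)) := by
  rw [eq_sub_iff_add_eq, S1, S0, Finset.sum_mul]
  have hL : (∑ i ∈ Finset.Icc 1 q, (MvPolynomial.X (0 : Fin 2) ^ ((q + 1 - i) * (q - 1)) *
        MvPolynomial.X 1 ^ (i * (q - 1)) : MvPolynomial (Fin 2) F))
      + MvPolynomial.X 1 ^ ((q + 1) * (q - 1))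
      = ∑ i ∈ Finset.Icc 1 (q + 1), (MvPolynomial.X (0 : Fin 2) ^ ((q + 1 - i) * (q - 1)) *
        MvPolynomial.X 1 ^ (i * (q - 1)) : MvPolynomial (Fin 2) F) := by
    rw [Finset.sum_Icc_succ_top (by omega : 1 ≤ q + 1)]
    congr 1
    rw [Nat.sub_self, zero_mul, pow_zero, one_mul]
  rw [hL, ← Finset.Ico_add_one_right_eq_Icc, Finset.sum_Ico_eq_sum_range]
  have hn : q + 1 + 1 - 1 = q + 1 := by omega
  rw [hn]
  refine Finset.sum_congr rfl fun i hi => ?_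
  rw [Finset.mem_range] at hi
  rw [mul_assoc, ← pow_add]
  have e0 : q + 1 - (1 + i) = q - i := by omega
  have e1 : (1 + i) * (q - 1) = i * (q - 1) + (q - 1) := by ring
  rw [e0, e1]

end MvMain


end AuxMv

/-- the coefficient of `x_1^{q³-q} x_2^{q³-2q²+q}` in `S_1^q·S_0^{q-1}`
is `-1`, and in particular `S_1^q·S_0^{q-1} ≠ 0` in
`Q = F_q[x_1,x_2]/(x_1^{q³},x_2^{q³})`. -/
theorem statement19 (F : Type) [Field F] [Fintype F] (q : ℕ) (hq : Fintype.card F = q) :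
    MvPolynomial.coeff
        (Finsupp.single 0 (q ^ 3 - q) + Finsupp.single 1 (q ^ 3 - 2 * q ^ 2 + q))
        (S1 F q ^ q * S0 F q ^ (q - 1)) = -1
    ∧ Ideal.Quotient.mk (frobIdeal F 2 (q ^ 3)) (S1 F q ^ q * S0 F q ^ (q - 1)) ≠ 0 := by
  classical
  -- characteristic setup
  set p := ringChar F with hpdef
  haveI : CharP F p := ringChar.charP F
  have hp : p.Prime := CharP.char_is_prime F p
  haveI := Fact.mk hp
  obtain ⟨n, -, hcard⟩ := FiniteField.card F p
  have hqpn : q = p ^ (n : ℕ) := by rw [← hq, hcard]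
  have hn : (n : ℕ) ≠ 0 := n.pos.ne'
  have hq2 : 2 ≤ q := by rw [← hq]; exact Fintype.one_lt_card
  -- basic arithmetic facts
  have h2q3 : 2 * q ^ 2 ≤ q ^ 3 := by nlinarith
  have hqq3 : q ≤ q ^ 3 := by nlinarith
  have hqsq : q ≤ q ^ 2 := by nlinarith
  have hA : (q - 1) * q = q ^ 2 - q := by
    rw [Nat.sub_mul, one_mul, pow_two]
  have hq2z : (2 : ℤ) ≤ (q : ℤ) := by exact_mod_cast hq2
  have hkey2 : q ^ 2 - q ≤ q ^ 3 - 2 * q ^ 2 + q := by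
    zify [h2q3, hqsq]
    nlinarith [hq2z]
  have hE2 : (q + 1) * (q - 1) * q = q ^ 3 - q := by
    zify [show 1 ≤ q by omega, hqq3]
    ring
  -- the target exponent finsupp
  set T : Fin 2 →₀ ℕ :=
    Finsupp.single 0 (q ^ 3 - q) + Finsupp.single 1 (q ^ 3 - 2 * q ^ 2 + q) with hTdef
  have hT0 : T 0 = q ^ 3 - q := by simp [hTdef, Finsupp.single_apply]
  have hT1 : T 1 = q ^ 3 - 2 * q ^ 2 + q := by simp [hTdef, Finsupp.single_apply]
  -- the product identity
  have hS1q : S1 F q ^ q = S0 F q ^ q * MvPolynomial.X 1 ^ ((q - 1) * q)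
      - MvPolynomial.X 1 ^ ((q + 1) * (q - 1) * q) := by
    rw [S1_eq q hq2, frobsub p (n : ℕ) q hqpn (MvPolynomial (Fin 2) F), mul_pow,
      ← pow_mul, ← pow_mul]
  have hprod : S1 F q ^ q * S0 F q ^ (q - 1)
      = S0 F q ^ (q + (q - 1)) * MvPolynomial.X 1 ^ ((q - 1) * q)
        - S0 F q ^ (q - 1) * MvPolynomial.X 1 ^ ((q + 1) * (q - 1) * q) := by
    rw [hS1q, sub_mul, pow_add]; ring
  -- coefficient of the second term is zero
  have hzero2 : MvPolynomial.coeff T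
      (S0 F q ^ (q - 1) * MvPolynomial.X 1 ^ ((q + 1) * (q - 1) * q)) = 0 := by
    apply mv_coeff_mul_X_pow_zero
    rw [hT1, hE2]
    have : q < q ^ 2 := by nlinarith
    omega
  -- coefficient of the first term
  have hble : (q - 1) * q ≤ T 1 := by
    rw [hT1, hA]
    exact hkey2
  have hfirst : MvPolynomial.coeff T
      (S0 F q ^ (q + (q - 1)) * MvPolynomial.X 1 ^ ((q - 1) * q)) = -1 := by
    rw [mv_coeff_mul_X_pow _ _ _ _ hble]
    set b' : ℕ := (q ^ 3 - 2 * q ^ 2 + q) - (q ^ 2 - q) with hb'def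
    have hTsub : T - Finsupp.single 1 ((q - 1) * q)
        = Finsupp.single 0 (q ^ 3 - q) + Finsupp.single 1 b' := by
      ext j
      fin_cases j <;>
        simp [hTdef, hb'def, Finsupp.single_apply, hA, Finsupp.tsub_apply]
    rw [hTsub]
    have hb' : b' = (q - 1) * (q * (q - 2)) := by
      rw [hb'def]
      zify [show 1 ≤ q by omega, show 2 ≤ q by omega, h2q3, hqsq, hkey2]
      ring
    have hhom : (S0 F q ^ (q + (q - 1))).IsHomogeneous (q * (q - 1) * (q + (q - 1))) :=
      (S0_homog q).pow _
    have hab : (q ^ 3 - q) + b' = q * (q - 1) * (q + (q - 1)) := by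
      rw [hb']
      zify [show 1 ≤ q by omega, show 2 ≤ q by omega, hqq3]
      ring
    rw [coeff_homog hhom hab]
    have haev : (MvPolynomial.aeval ![(1 : Polynomial F), Polynomial.X]) (S0 F q)
        = Polynomial.expand F (q - 1) (gpol F q) := by
      rw [S0, map_sum, gpol, map_sum]
      refine Finset.sum_congr rfl fun i _ => ?_
      rw [map_mul, map_pow, map_pow, MvPolynomial.aeval_X, MvPolynomial.aeval_X,
        map_pow, Polynomial.expand_X]
      simp only [Matrix.cons_val_zero, Matrix.cons_val_one, Matrix.head_cons, one_pow, one_mul]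
      rw [← pow_mul, mul_comm]
    rw [map_pow, haev, ← map_pow, Polynomial.coeff_expand (by omega : 0 < q - 1), hb',
      if_pos ⟨_, rfl⟩, Nat.mul_div_cancel_left _ (by omega : 0 < q - 1)]
    exact main_poly_coeff p (n : ℕ) q hqpn hn hq2
  have hcoeff : MvPolynomial.coeff T (S1 F q ^ q * S0 F q ^ (q - 1)) = -1 := by
    rw [hprod, MvPolynomial.coeff_sub, hzero2, hfirst, sub_zero]
  refine ⟨hcoeff, ?_⟩
  -- nonvanishing in the quotient
  intro hmem
  rw [Ideal.Quotient.eq_zero_iff_mem, frobIdeal] at hmem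
  have hrange : (Set.range fun i : Fin 2 =>
      (MvPolynomial.X i : MvPolynomial (Fin 2) F) ^ (q ^ 3))
      = {MvPolynomial.X 0 ^ (q ^ 3), MvPolynomial.X 1 ^ (q ^ 3)} := by
    ext y
    constructor
    · rintro ⟨i, rfl⟩
      fin_cases i
      · exact Or.inl rfl
      · exact Or.inr rfl
    · rintro (rfl | rfl)
      · exact ⟨0, rfl⟩
      · exact ⟨1, rfl⟩
  rw [hrange, Ideal.mem_span_pair] at hmem
  obtain ⟨A, B, hAB⟩ := hmem
  have h0 : MvPolynomial.coeff T (A * MvPolynomial.X 0 ^ (q ^ 3)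
      + B * MvPolynomial.X 1 ^ (q ^ 3)) = 0 := by
    rw [MvPolynomial.coeff_add, mv_coeff_mul_X_pow_zero _ _ _ _ (by rw [hT0]; omega),
      mv_coeff_mul_X_pow_zero _ _ _ _ (by rw [hT1]; omega), add_zero]
  rw [hAB, hcoeff] at h0
  exact one_ne_zero (neg_eq_zero.mp h0)
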